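/- If A and B are positive semidefinite n×n matrices with A ≤ B, then for every p > 0 there exists a unitary matrix U such that A^p ≤ U B^p U*. -/

import Mathlib

open scoped ComplexOrder

/-- The `r`-th power of a matrix, defined via the spectral theorem (functional calculus)
when the matrix is Hermitian, and junk value `0` otherwise. -/
noncomputable def Matrix.rpow {n : ℕ} (A : Matrix (Fin n) (Fin n) ℂ) (r : ℝ) :
    Matrix (Fin n) (Fin n) ℂ :=
  if h : A.IsHermitian then h.cfc (fun x => x ^ r) else 0

open Matrix in
/-- Representation of the quadratic form of a Hermitian matrix on a vector lying in the span
of some of its eigenvectors. -/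
lemma quad_repr {n : ℕ} {M : Matrix (Fin n) (Fin n) ℂ} (hM : M.IsHermitian)
    (s : Finset (Fin n)) (x : EuclideanSpace ℂ (Fin n))
    (hx : x ∈ Submodule.span ℂ (Set.range fun j : s => hM.eigenvectorBasis j)) :
    ∃ w : s → ℝ, (∀ j, 0 ≤ w j) ∧ ‖x‖ ^ 2 = ∑ j, w j ∧
      (inner ℂ x (Matrix.toEuclideanLin M x) : ℂ).re = ∑ j : s, hM.eigenvalues j.1 * w j := by
  classical
  obtain ⟨c, hc⟩ := Submodule.mem_span_range_iff_exists_fun ℂ |>.mp hx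
  have hon : Orthonormal ℂ (fun j : s => hM.eigenvectorBasis j) :=
    hM.eigenvectorBasis.orthonormal.comp _ Subtype.val_injective
  have he : ∀ j : Fin n, Matrix.toEuclideanLin M (hM.eigenvectorBasis j)
      = ((hM.eigenvalues j : ℂ)) • (hM.eigenvectorBasis j) := by
    intro j
    ext i
    have h2 := congrFun (hM.mulVec_eigenvectorBasis j) i
    simpa [Matrix.toEuclideanLin_apply, Complex.real_smul] using h2
  refine ⟨fun j => Complex.normSq (c j), fun j => Complex.normSq_nonneg _, ?_, ?_⟩
  · have h1 : (inner ℂ x x : ℂ) = ∑ j : s, (starRingEnd ℂ) (c j) * c j := by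
      rw [← hc]; exact hon.inner_sum c c Finset.univ
    have h2 : ‖x‖ ^ 2 = (inner ℂ x x : ℂ).re := (inner_self_eq_norm_sq (𝕜 := ℂ) x).symm
    rw [h2, h1, Complex.re_sum]
    refine Finset.sum_congr rfl fun j _ => ?_
    rw [mul_comm, Complex.mul_conj]
    simp
  · have hlin : Matrix.toEuclideanLin M x
        = ∑ j : s, ((hM.eigenvalues j : ℂ) * c j) • hM.eigenvectorBasis j := by
      rw [← hc, map_sum]
      refine Finset.sum_congr rfl fun j _ => ?_
      rw [LinearMap.map_smul, he (j : Fin n), smul_smul, mul_comm]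
    rw [hlin, ← hc, hon.inner_sum, Complex.re_sum]
    refine Finset.sum_congr rfl fun j _ => ?_
    have : (starRingEnd ℂ) (c j) * ((hM.eigenvalues j : ℂ) * c j)
        = (hM.eigenvalues j : ℂ) * (Complex.normSq (c j) : ℂ) := by
      rw [show (starRingEnd ℂ) (c j) * ((hM.eigenvalues j : ℂ) * c j)
          = (hM.eigenvalues j : ℂ) * (c j * (starRingEnd ℂ) (c j)) by ring, Complex.mul_conj]
    rw [this]
    simp

open Matrix in
/-- Dimension-counting (Courant–Fischer style) comparison of eigenvalue bounds
for `A ≤ B`. -/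
lemma key_eigenvalue_le {n : ℕ} {A B : Matrix (Fin n) (Fin n) ℂ}
    (hA : A.IsHermitian) (hB : B.IsHermitian) (hAB : (B - A).PosSemidef)
    (I J : Finset (Fin n)) (hcard : n < I.card + J.card) {a b : ℝ}
    (hIa : ∀ i ∈ I, a ≤ hA.eigenvalues i) (hJb : ∀ j ∈ J, hB.eigenvalues j ≤ b) :
    a ≤ b := by
  classical
  by_contra hab
  push_neg at hab
  set S := Submodule.span ℂ (Set.range fun j : I => hA.eigenvectorBasis j) with hSdef
  set T := Submodule.span ℂ (Set.range fun j : J => hB.eigenvectorBasis j) with hTdef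
  have hS : Module.finrank ℂ S = I.card := by
    rw [hSdef]
    exact (finrank_span_eq_card
      ((hA.eigenvectorBasis.orthonormal.linearIndependent).comp _ Subtype.val_injective)).trans
      (Fintype.card_coe I)
  have hT : Module.finrank ℂ T = J.card := by
    rw [hTdef]
    exact (finrank_span_eq_card
      ((hB.eigenvectorBasis.orthonormal.linearIndependent).comp _ Subtype.val_injective)).trans
      (Fintype.card_coe J)
  have h1 := Submodule.finrank_sup_add_finrank_inf_eq S T
  have h2 : Module.finrank ℂ ↥(S ⊔ T) ≤ n := by
    simpa [finrank_euclideanSpace_fin] using Submodule.finrank_le (S ⊔ T)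
  have hST : 0 < Module.finrank ℂ ↥(S ⊓ T) := by omega
  have : Nontrivial ↥(S ⊓ T) := Module.nontrivial_of_finrank_pos hST
  obtain ⟨y, hy⟩ := exists_ne (0 : ↥(S ⊓ T))
  set x : EuclideanSpace ℂ (Fin n) := y.1 with hxdef
  have hx0 : x ≠ 0 := fun h => hy (Subtype.ext h)
  have hxS : x ∈ S := (Submodule.mem_inf.mp y.2).1
  have hxT : x ∈ T := (Submodule.mem_inf.mp y.2).2
  obtain ⟨wA, hwA0, hwAsum, hwArepr⟩ := quad_repr hA I x hxS
  obtain ⟨wB, hwB0, hwBsum, hwBrepr⟩ := quad_repr hB J x hxT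
  have hAx : a * ‖x‖ ^ 2 ≤ (inner ℂ x (Matrix.toEuclideanLin A x) : ℂ).re := by
    rw [hwArepr, hwAsum, Finset.mul_sum]
    exact Finset.sum_le_sum fun j _ =>
      mul_le_mul_of_nonneg_right (hIa j.1 j.2) (hwA0 j)
  have hBx : (inner ℂ x (Matrix.toEuclideanLin B x) : ℂ).re ≤ b * ‖x‖ ^ 2 := by
    rw [hwBrepr, hwBsum, Finset.mul_sum]
    exact Finset.sum_le_sum fun j _ =>
      mul_le_mul_of_nonneg_right (hJb j.1 j.2) (hwB0 j)
  have hdiff : 0 ≤ (inner ℂ x (Matrix.toEuclideanLin (B - A) x) : ℂ).re := by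
    have h3 := hAB.dotProduct_mulVec_nonneg (WithLp.equiv 2 (Fin n → ℂ) x)
    have h4 : (inner ℂ x (Matrix.toEuclideanLin (B - A) x) : ℂ)
        = dotProduct (star (WithLp.equiv 2 (Fin n → ℂ) x)) ((B - A) *ᵥ (WithLp.equiv 2 (Fin n → ℂ) x)) := by
      rw [EuclideanSpace.inner_eq_star_dotProduct, dotProduct_comm]; rfl
    rw [h4]
    exact (Complex.le_def.mp h3).1
  have hsub : (inner ℂ x (Matrix.toEuclideanLin (B - A) x) : ℂ).re
      = (inner ℂ x (Matrix.toEuclideanLin B x) : ℂ).re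
        - (inner ℂ x (Matrix.toEuclideanLin A x) : ℂ).re := by
    rw [map_sub, LinearMap.sub_apply, inner_sub_right, Complex.sub_re]
  have hxpos : 0 < ‖x‖ ^ 2 := pow_pos (norm_pos_iff.mpr hx0) 2
  nlinarith

/-- Weyl-type eigenvalue matching: there is a permutation `π` with
`λ_A i ≤ λ_B (π i)` for all `i`. -/
lemma exists_perm_eigenvalues_le {n : ℕ} {A B : Matrix (Fin n) (Fin n) ℂ}
    (hA : A.IsHermitian) (hB : B.IsHermitian) (hAB : (B - A).PosSemidef) :
    ∃ π : Equiv.Perm (Fin n), ∀ i, hA.eigenvalues i ≤ hB.eigenvalues (π i) := by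
  classical
  set σ := Tuple.sort hA.eigenvalues with hσ
  set τ := Tuple.sort hB.eigenvalues with hτ
  have key : ∀ k, hA.eigenvalues (σ k) ≤ hB.eigenvalues (τ k) := by
    intro k
    apply key_eigenvalue_le hA hB hAB
      (Finset.image σ (Finset.Ici k)) (Finset.image τ (Finset.Iic k))
    · rw [Finset.card_image_of_injective _ σ.injective,
        Finset.card_image_of_injective _ τ.injective, Fin.card_Ici, Fin.card_Iic]
      omega
    · rintro i hi
      obtain ⟨m, hm, rfl⟩ := Finset.mem_image.mp hi
      exact Tuple.monotone_sort hA.eigenvalues (Finset.mem_Ici.mp hm)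
    · rintro j hj
      obtain ⟨m, hm, rfl⟩ := Finset.mem_image.mp hj
      exact Tuple.monotone_sort hB.eigenvalues (Finset.mem_Iic.mp hm)
  refine ⟨σ.symm.trans τ, fun i => ?_⟩
  have := key (σ.symm i)
  simpa using this

open Matrix in
/-- Conjugating a diagonal matrix by a permutation matrix permutes the diagonal. -/
lemma perm_conj_diag {n : ℕ} (σ : Equiv.Perm (Fin n)) (d : Fin n → ℂ) :
    (Matrix.of fun i j => if σ i = j then (1 : ℂ) else 0) * Matrix.diagonal d
      * star (Matrix.of fun i j => if σ i = j then (1 : ℂ) else 0)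
      = Matrix.diagonal (d ∘ σ) := by
  ext i j
  rw [Matrix.mul_apply]
  simp only [Matrix.mul_diagonal, Matrix.of_apply, Matrix.star_apply, Matrix.diagonal_apply]
  rw [Finset.sum_eq_single (σ i)]
  · by_cases h : i = j
    · simp [h]
    · have h2 : ¬ σ j = σ i := fun hc => h (σ.injective hc).symm
      simp [h, h2]
  · intro k _ hk
    simp [Ne.symm hk]
  · simp

/-- If `A ≤ B` (Loewner order) are positive semidefinite matrices, then for every `p > 0`
there exists a unitary `U` with `A^p ≤ U B^p U*`. -/
theorem exists_unitary_rpow_le {n : ℕ} (A B : Matrix (Fin n) (Fin n) ℂ)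
    (hA : A.PosSemidef) (hB : B.PosSemidef) (hAB : (B - A).PosSemidef)
    (p : ℝ) (hp : 0 < p) :
    ∃ U : Matrix (Fin n) (Fin n) ℂ, U ∈ Matrix.unitaryGroup (Fin n) ℂ ∧
      (U * Matrix.rpow B p * star U - Matrix.rpow A p).PosSemidef := by
  classical
  obtain ⟨π, hπ⟩ := exists_perm_eigenvalues_le hA.1 hB.1 hAB
  set VA : Matrix (Fin n) (Fin n) ℂ := (hA.1.eigenvectorUnitary : Matrix (Fin n) (Fin n) ℂ) with hVA
  set VB : Matrix (Fin n) (Fin n) ℂ := (hB.1.eigenvectorUnitary : Matrix (Fin n) (Fin n) ℂ) with hVB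
  set P : Matrix (Fin n) (Fin n) ℂ :=
    Matrix.of (fun i j => if π i = j then (1 : ℂ) else 0) with hPdef
  set dA : Fin n → ℂ := fun i => Complex.ofReal ((hA.1.eigenvalues i) ^ p) with hdA
  set dB : Fin n → ℂ := fun i => Complex.ofReal ((hB.1.eigenvalues i) ^ p) with hdB
  have hPunit : P * star P = 1 := by
    have h := perm_conj_diag π (fun _ => (1 : ℂ))
    rw [Matrix.diagonal_one, mul_one] at h
    rw [hPdef]
    rw [h]
    ext i j
    simp [Matrix.diagonal_apply, Matrix.one_apply]
  have hPmem : P ∈ Matrix.unitaryGroup (Fin n) ℂ := Matrix.mem_unitaryGroup_iff.mpr hPunit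
  have hVBunit : star VB * VB = 1 := by
    rw [hVB]
    exact Matrix.mem_unitaryGroup_iff'.mp hB.1.eigenvectorUnitary.2
  refine ⟨VA * P * star VB, ?_, ?_⟩
  · exact mul_mem (mul_mem hA.1.eigenvectorUnitary.2 hPmem)
      (Unitary.star_mem hB.1.eigenvectorUnitary.2)
  · have hrB : Matrix.rpow B p = VB * Matrix.diagonal dB * star VB := by
      rw [Matrix.rpow, dif_pos hB.1]; rfl
    have hrA : Matrix.rpow A p = VA * Matrix.diagonal dA * star VA := by
      rw [Matrix.rpow, dif_pos hA.1]; rfl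
    have hstarU : star (VA * P * star VB) = VB * (star P * star VA) := by
      rw [star_mul, star_mul, star_star]
    have key : (VA * P * star VB) * Matrix.rpow B p * star (VA * P * star VB)
        = VA * Matrix.diagonal (dB ∘ π) * star VA := by
      rw [hrB, hstarU]
      have e1 : VA * P * star VB * (VB * Matrix.diagonal dB * star VB)
          = VA * P * Matrix.diagonal dB * star VB := by
        rw [show VA * P * star VB * (VB * Matrix.diagonal dB * star VB)
            = VA * P * (star VB * VB) * Matrix.diagonal dB * star VB by
          simp only [mul_assoc], hVBunit, mul_one]
      rw [e1]
      have e2 : VA * P * Matrix.diagonal dB * star VB * (VB * (star P * star VA))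
          = VA * (P * Matrix.diagonal dB * star P) * star VA := by
        rw [show VA * P * Matrix.diagonal dB * star VB * (VB * (star P * star VA))
            = VA * P * Matrix.diagonal dB * (star VB * VB) * star P * star VA by
          simp only [mul_assoc], hVBunit, mul_one]
        simp only [mul_assoc]
      rw [e2, hPdef, perm_conj_diag]
    rw [key, hrA]
    have e3 : VA * Matrix.diagonal (dB ∘ π) * star VA - VA * Matrix.diagonal dA * star VA
        = VA * Matrix.diagonal (dB ∘ π - dA) * star VA := by
      rw [← sub_mul, ← mul_sub, Matrix.diagonal_sub]
      rfl
    rw [e3]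
    have hg : ∀ i, 0 ≤ (dB ∘ π - dA) i := by
      intro i
      have h5 : hA.1.eigenvalues i ^ p ≤ hB.1.eigenvalues (π i) ^ p :=
        Real.rpow_le_rpow (hA.eigenvalues_nonneg i) (hπ i) hp.le
      simp only [Pi.sub_apply, Function.comp_apply, hdA, hdB, ← Complex.ofReal_sub]
      rw [Complex.zero_le_real]
      linarith
    have hdiag : (Matrix.diagonal (dB ∘ π - dA)).PosSemidef :=
      Matrix.posSemidef_diagonal_iff.mpr hg
    have := hdiag.mul_mul_conjTranspose_same VA
    rwa [← Matrix.star_eq_conjTranspose] at this
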